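/- arXiv:1304.3033 — 3 statements merged into one kernel-verified Lean document; each statement's English description precedes it below -/
import Mathlib

section
/- Let C be a symmetric monoidal category and suppose the forgetful functor from commutative monoid objects in C to C is a split epimorphism in Cat, i.e., there exists a functor S : C ⥤ CommMon(C) such that S followed by the forgetful functor is the identity functor of C. Then the monoidal unit 𝟙 is an initial object of C. -/
open CategoryTheory CategoryTheory.Limits CategoryTheory.MonoidalCategory

private lemma aux_split {C : Type*} [Category C] [MonoidalCategory C]
    (M : Mon C) (e : M.X = 𝟙_ C) :
    ((MonObj.one : 𝟙_ C ⟶ M.X) ≫ eqToHom e) ≫ (ρ_ (𝟙_ C)).inv ≫ (eqToHom e.symm ⊗ₘ eqToHom e.symm) ≫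
      (MonObj.mul : M.X ⊗ M.X ⟶ M.X) ≫ eqToHom e = 𝟙 (𝟙_ C) := by
  obtain ⟨A, inst⟩ := M
  dsimp at e ⊢
  subst e
  simp only [eqToHom_refl, Category.comp_id, Category.id_comp, id_tensorHom_id]
  rw [rightUnitor_inv_naturality_assoc, MonObj.one_mul, unitors_equal]
  simp

/-- If the forgetful functor `CommMon_ C ⥤ C` from commutative monoid objects in a symmetric
monoidal category `C` admits a section (i.e. it is a split epimorphism in `Cat`), then the
monoidal unit `𝟙_ C` is an initial object of `C`. -/
theorem stmt2 {C : Type*} [Category C] [MonoidalCategory C] [SymmetricCategory C]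
    (S : C ⥤ CommMon C)
    (hS : S ⋙ (CommMon.forget₂Mon C ⋙ Mon.forget C) = 𝟭 C) :
    Nonempty (IsInitial (𝟙_ C)) := by
  have hobj : ∀ X : C, ((S.obj X).X : C) = X := fun X => Functor.congr_obj hS X
  have hhom : ∀ {X Y : C} (f : X ⟶ Y),
      (S.map f).hom.hom = eqToHom (hobj X) ≫ f ≫ eqToHom (hobj Y).symm :=
    fun {X Y} f => Functor.congr_hom hS f
  let u : ∀ X : C, 𝟙_ C ⟶ X := fun X => (MonObj.one : 𝟙_ C ⟶ (S.obj X).X) ≫ eqToHom (hobj X)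
  have key : ∀ {X : C} (f : 𝟙_ C ⟶ X), u (𝟙_ C) ≫ f = u X := by
    intro X f
    have h1 : (MonObj.one : 𝟙_ C ⟶ (S.obj (𝟙_ C)).X) ≫ eqToHom (hobj (𝟙_ C)) ≫ f ≫
        eqToHom (hobj X).symm = (MonObj.one : 𝟙_ C ⟶ (S.obj X).X) := by
      have h1 := IsMonHom.one_hom (S.map f).hom.hom
      rw [hhom f] at h1
      exact h1
    simp only [u, Category.assoc]
    rw [← h1]
    simp
  have hsplit : ∃ h : 𝟙_ C ⟶ 𝟙_ C, u (𝟙_ C) ≫ h = 𝟙 (𝟙_ C) :=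
    ⟨(ρ_ (𝟙_ C)).inv ≫ (eqToHom (hobj (𝟙_ C)).symm ⊗ₘ eqToHom (hobj (𝟙_ C)).symm) ≫
      (MonObj.mul : (S.obj (𝟙_ C)).X ⊗ (S.obj (𝟙_ C)).X ⟶ (S.obj (𝟙_ C)).X) ≫ eqToHom (hobj (𝟙_ C)),
      aux_split (S.obj (𝟙_ C)).toMon (hobj (𝟙_ C))⟩
  obtain ⟨h, hh⟩ := hsplit
  have hmono : Mono (u (𝟙_ C)) :=
    ⟨fun g g' e => by simpa [Category.assoc, hh] using congrArg (· ≫ h) e⟩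
  have hid : u (𝟙_ C) = 𝟙 (𝟙_ C) :=
    hmono.right_cancellation _ _ (by simpa using key (u (𝟙_ C)))
  exact ⟨IsInitial.ofUniqueHom u (fun X f => by rw [← key f, hid, Category.id_comp])⟩
end

section
/- For any symmetric monoidal category C, the category CommMon(C) of commutative monoid objects in C and monoid morphisms has finite coproducts. -/
open CategoryTheory CategoryTheory.Limits

namespace FoxAux

open MonoidalCategory MonObj

variable {C : Type*} [Category C] [MonoidalCategory C] [SymmetricCategory C]

theorem one_mul_one (N : C) [MonObj N] :
    (η[N] ⊗ₘ η[N]) ≫ μ[N] = (λ_ (𝟙_ C)).hom ≫ η[N] := by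
  rw [one_mul_hom]

instance isMonHom_one (N : C) [MonObj N] : IsMonHom η[N] where
  one_hom := by simp
  mul_hom := by rw [one_mul_one]; simp

instance isMonHom_mul (M : C) [MonObj M] [IsCommMonObj M] : IsMonHom μ[M] where
  one_hom := by rw [MonObj.tensorObj.one_def, Category.assoc, one_mul_hom, Iso.inv_hom_id_assoc]
  mul_hom := by rw [MonObj.tensorObj.mul_def, Category.assoc, MonObj.mul_mul_mul_comm]

/-- The coproduct of two commutative monoid objects: the tensor product `M ⊗ N`. -/
abbrev tensorObj (M N : CommMon C) : CommMon C := ⟨M.X ⊗ N.X⟩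

def inl (M N : CommMon C) : M ⟶ tensorObj M N :=
  CommMon.homMk (Mon.ofHom ((ρ_ M.X).inv ≫ (M.X ◁ η[N.X])))

def inr (M N : CommMon C) : N ⟶ tensorObj M N :=
  CommMon.homMk (Mon.ofHom ((λ_ N.X).inv ≫ (η[M.X] ▷ N.X)))

theorem inl_inr_mul (M N : CommMon C) :
    (((ρ_ M.X).inv ≫ (M.X ◁ η[N.X])) ⊗ₘ ((λ_ N.X).inv ≫ (η[M.X] ▷ N.X))) ≫
      tensorμ M.X N.X M.X N.X ≫ (μ[M.X] ⊗ₘ μ[N.X]) = 𝟙 (M.X ⊗ N.X) := by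
  rw [← tensorHom_comp_tensorHom, Category.assoc, ← id_tensorHom, ← tensorHom_id,
    tensorμ_natural_assoc]
  slice_lhs 3 4 => rw [tensorHom_comp_tensorHom]
  simp only [id_tensorHom, tensorHom_id, MonObj.mul_one, MonObj.one_mul]
  dsimp only [tensorμ]
  simp only [braiding_tensorUnit_left, braiding_tensorUnit_right]
  monoidal

/-- The codiagonal morphism, at the level of monoid objects. -/
def descHom {M N P : C} [MonObj M] [MonObj N] [MonObj P] [IsCommMonObj P] (f : M ⟶ P)
    (g : N ⟶ P) [hf : IsMonHom f] [hg : IsMonHom g] : Mon.mk (M ⊗ N) ⟶ Mon.mk P :=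
  Mon.ofHom ((f ⊗ₘ g) ≫ μ[P])

/-- The codiagonal morphism out of the coproduct. -/
def desc {M N P : CommMon C} (f : M ⟶ P) (g : N ⟶ P) : tensorObj M N ⟶ P :=
  CommMon.homMk (descHom (M := M.X) (N := N.X) (P := P.X) f.hom.hom g.hom.hom
    (hf := f.hom.isMonHom_hom) (hg := g.hom.isMonHom_hom))

theorem inl_desc (M N P : C) [MonObj M] [MonObj N] [MonObj P] (f : M ⟶ P) (g : N ⟶ P)
    (hg : η[N] ≫ g = η[P]) : ((ρ_ M).inv ≫ (M ◁ η[N])) ≫ (f ⊗ₘ g) ≫ μ[P] = f := by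
  rw [Category.assoc, ← id_tensorHom, tensorHom_comp_tensorHom_assoc, hg,
    Category.id_comp, mul_one_hom, Iso.inv_hom_id_assoc]

theorem inr_desc (M N P : C) [MonObj M] [MonObj N] [MonObj P] (f : M ⟶ P) (g : N ⟶ P)
    (hf : η[M] ≫ f = η[P]) : ((λ_ N).inv ≫ (η[M] ▷ N)) ≫ (f ⊗ₘ g) ≫ μ[P] = g := by
  rw [Category.assoc, ← tensorHom_id, tensorHom_comp_tensorHom_assoc, hf,
    Category.id_comp, one_mul_hom, Iso.inv_hom_id_assoc]

theorem desc_uniq (M N : CommMon C) (P : C) [MonObj P] (m : M.X ⊗ N.X ⟶ P) [hm : IsMonHom m] :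
    m = ((((ρ_ M.X).inv ≫ (M.X ◁ η[N.X])) ≫ m) ⊗ₘ
      (((λ_ N.X).inv ≫ (η[M.X] ▷ N.X)) ≫ m)) ≫ μ[P] := by
  rw [← tensorHom_comp_tensorHom_assoc, ← IsMonHom.mul_hom, MonObj.tensorObj.mul_def]
  simp only [Category.assoc]
  rw [reassoc_of% (inl_inr_mul M N)]

def isColimitTensorObj (M N : CommMon C) :
    IsColimit (BinaryCofan.mk (inl M N) (inr M N)) := by
  refine BinaryCofan.isColimitMk (fun s => desc s.inl s.inr) (fun s => ?_) (fun s => ?_)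
    (fun s m h₁ h₂ => ?_)
  · ext
    exact inl_desc _ _ _ _ _ s.inr.hom.isMonHom_hom.one_hom
  · ext
    exact inr_desc _ _ _ _ _ s.inl.hom.isMonHom_hom.one_hom
  · ext
    rw [← h₁, ← h₂]
    exact desc_uniq M N _ m.hom.hom (hm := m.hom.isMonHom_hom)

instance (M N : CommMon C) : HasColimit (pair M N) :=
  HasColimit.mk ⟨_, isColimitTensorObj M N⟩

instance : HasBinaryCoproducts (CommMon C) :=
  { has_colimit := fun F => hasColimit_of_iso (diagramIsoPair F) }

end FoxAux

/-- Fox's theorem: the category of commutative monoid objects in a symmetric monoidal category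
has finite coproducts. -/
theorem stmt5 (C : Type*) [Category C] [MonoidalCategory C] [SymmetricCategory C] :
    HasFiniteCoproducts (CommMon C) := by
  exact hasFiniteCoproducts_of_has_binary_and_initial
end

section
/- Let C be a category with finite products and finite coproducts. Suppose there exist an isomorphism between the initial object 0 and the terminal object 1 of C, and a natural isomorphism between the two bifunctors C × C → C given by (X, Y) ↦ X ⊔ Y and (X, Y) ↦ X × Y. Then for all objects X and Y the canonical comparison morphism X ⊔ Y → X × Y — whose components are ⟨id_X, 0⟩ : X → X × Y and ⟨0, id_Y⟩ : Y → X × Y, where 0 denotes the zero morphisms arising from the zero object — is an isomorphism; in particular C has binary biproducts. -/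
open CategoryTheory CategoryTheory.Limits

variable {C : Type*} [Category C] [HasFiniteProducts C] [HasFiniteCoproducts C]

attribute [local simp] prod.lift_fst prod.lift_snd coprod.inl_desc coprod.inr_desc prod.lift_fst_assoc prod.lift_snd_assoc coprod.inl_desc_assoc coprod.inr_desc_assoc

/-- The zero morphism `X ⟶ Y` arising from an isomorphism between the initial and the terminal
object (which makes them a zero object): `X ⟶ 1 ≅ 0 ⟶ Y`. -/
noncomputable def zeroMor (i : (⊥_ C) ≅ (⊤_ C)) (X Y : C) : X ⟶ Y :=
  terminal.from X ≫ i.inv ≫ initial.to Y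

/-- The zero-morphism structure on `C` arising from an isomorphism between the initial and the
terminal object. -/
noncomputable def zeroMorphismsOfInitialIsoTerminal (i : (⊥_ C) ≅ (⊤_ C)) :
    HasZeroMorphisms C where
  zero X Y := ⟨zeroMor i X Y⟩
  comp_zero {X Y} f Z := by
    show f ≫ zeroMor i Y Z = zeroMor i X Z
    rw [zeroMor, zeroMor, ← Category.assoc, terminal.comp_from]
  zero_comp X {Y Z} f := by
    show zeroMor i X Y ≫ f = zeroMor i X Z
    rw [zeroMor, zeroMor, Category.assoc, Category.assoc, initial.to_comp]

theorem zeroMor_comp (i : (⊥_ C) ≅ (⊤_ C)) (X : C) {Y Z : C} (f : Y ⟶ Z) :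
    zeroMor i X Y ≫ f = zeroMor i X Z := by
  rw [zeroMor, zeroMor, Category.assoc, Category.assoc, initial.to_comp]

theorem comp_zeroMor (i : (⊥_ C) ≅ (⊤_ C)) {X Y : C} (f : X ⟶ Y) (Z : C) :
    f ≫ zeroMor i Y Z = zeroMor i X Z := by
  rw [zeroMor, zeroMor, ← Category.assoc, terminal.comp_from]

/-- Any morphism factoring through the initial object is the zero morphism. -/
theorem toBot_comp_eq_zeroMor (i : (⊥_ C) ≅ (⊤_ C)) {X Y : C} (f : X ⟶ (⊥_ C)) :
    f ≫ initial.to Y = zeroMor i X Y := by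
  have h1 : f = terminal.from X ≫ i.inv := by
    rw [← Category.comp_id f, ← i.hom_inv_id, ← Category.assoc]
    congr 1
    exact terminal.hom_ext _ _
  rw [h1, zeroMor, Category.assoc]

/-- `prod.fst : X ⨯ ⊥ ⟶ X` is an isomorphism when `⊥ ≅ ⊤`. -/
theorem isIso_fst_bot (i : (⊥_ C) ≅ (⊤_ C)) (X : C) :
    IsIso (prod.fst : X ⨯ (⊥_ C) ⟶ X) := by
  refine ⟨prod.lift (𝟙 X) (terminal.from X ≫ i.inv), ?_, by simp⟩
  apply Limits.prod.hom_ext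
  · simp
  · simp only [Category.assoc, prod.lift_snd, Category.id_comp]
    rw [← Category.assoc, terminal.comp_from, ← cancel_mono i.hom]
    exact terminal.hom_ext _ _

/-- `prod.snd : ⊥ ⨯ Y ⟶ Y` is an isomorphism when `⊥ ≅ ⊤`. -/
theorem isIso_snd_bot (i : (⊥_ C) ≅ (⊤_ C)) (Y : C) :
    IsIso (prod.snd : (⊥_ C) ⨯ Y ⟶ Y) := by
  refine ⟨prod.lift (terminal.from Y ≫ i.inv) (𝟙 Y), ?_, by simp⟩
  apply Limits.prod.hom_ext
  · simp only [Category.assoc, prod.lift_fst, Category.id_comp]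
    rw [← Category.assoc, terminal.comp_from, ← cancel_mono i.hom]
    exact terminal.hom_ext _ _
  · simp

/-- `coprod.inl : X ⟶ X ⨿ ⊥` is an isomorphism. -/
theorem isIso_inl_bot (X : C) : IsIso (coprod.inl : X ⟶ X ⨿ (⊥_ C)) := by
  refine ⟨coprod.desc (𝟙 X) (initial.to X), by simp, ?_⟩
  apply coprod.hom_ext
  · simp
  · exact initial.hom_ext _ _

/-- `coprod.inr : Y ⟶ ⊥ ⨿ Y` is an isomorphism. -/
theorem isIso_inr_bot (Y : C) : IsIso (coprod.inr : Y ⟶ (⊥_ C) ⨿ Y) := by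
  refine ⟨coprod.desc (initial.to Y) (𝟙 Y), by simp, ?_⟩
  apply coprod.hom_ext
  · exact initial.hom_ext _ _
  · simp

/-- Lack's "non-canonical isomorphisms" result: if a category `C` with finite products and
finite coproducts admits some isomorphism `⊥_ C ≅ ⊤_ C` and some natural isomorphism between
the coproduct and product bifunctors, then for all `X Y` the canonical comparison morphism
`X ⨿ Y ⟶ X ⨯ Y` (with components `⟨𝟙 X, 0⟩` and `⟨0, 𝟙 Y⟩`) is an isomorphism; in particular
`C` has binary biproducts. -/
theorem stmt6 (i : (⊥_ C) ≅ (⊤_ C)) (ni : (coprod.functor : C ⥤ C ⥤ C) ≅ prod.functor) :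
    (∀ X Y : C,
      IsIso (coprod.desc (prod.lift (𝟙 X) (zeroMor i X Y)) (prod.lift (zeroMor i Y X) (𝟙 Y)))) ∧
    @HasBinaryBiproducts C _ (zeroMorphismsOfInitialIsoTerminal i) := by
  -- the non-canonical natural isomorphism, componentwise
  let ω : ∀ A B : C, A ⨿ B ≅ A ⨯ B := fun A B => (ni.app A).app B
  have hωdef : ∀ A B : C, (ω A B).hom = (ni.hom.app A).app B := fun _ _ => rfl
  -- naturality in the second variable
  have natY : ∀ (A : C) {B B' : C} (g : B ⟶ B'),
      coprod.map (𝟙 A) g ≫ (ω A B').hom = (ω A B).hom ≫ prod.map (𝟙 A) g := by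
    intro A B B' g
    exact (ni.hom.app A).naturality g
  -- naturality in the first variable
  have natX : ∀ {A A' : C} (f : A ⟶ A') (B : C),
      coprod.map f (𝟙 B) ≫ (ω A' B).hom = (ω A B).hom ≫ prod.map f (𝟙 B) := by
    intro A A' f B
    have h := congrArg (fun t => t.app B) (ni.hom.naturality f)
    simp only [NatTrans.comp_app, coprod.functor_map_app, prod.functor_map_app] at h
    exact h
  -- the off-diagonal entries of ω are zero
  have hb : ∀ A B : C, coprod.inl ≫ (ω A B).hom ≫ prod.snd = zeroMor i A B := by
    intro A B
    have h := congrArg (fun t => coprod.inl ≫ t ≫ prod.snd) (natY A (initial.to B))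
    simp only [coprod.inl_map_assoc, Category.id_comp, Category.assoc, prod.map_snd] at h
    rw [h, ← Category.assoc, ← Category.assoc, toBot_comp_eq_zeroMor]
  have hc : ∀ A B : C, coprod.inr ≫ (ω A B).hom ≫ prod.fst = zeroMor i B A := by
    intro A B
    have h := congrArg (fun t => coprod.inr ≫ t ≫ prod.fst) (natX (initial.to A) B)
    simp only [coprod.inr_map_assoc, Category.id_comp, Category.assoc, prod.map_fst] at h
    rw [h, ← Category.assoc, ← Category.assoc, toBot_comp_eq_zeroMor]
  -- the diagonal entries of ω are isomorphisms
  have ha : ∀ A B : C, IsIso (coprod.inl ≫ (ω A B).hom ≫ prod.fst) := by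
    intro A B
    have h := congrArg (fun t => coprod.inl ≫ t ≫ prod.fst) (natY A (initial.to B))
    simp only [coprod.inl_map_assoc, Category.id_comp, Category.assoc, prod.map_fst,
      Category.comp_id] at h
    rw [h]
    haveI := isIso_inl_bot (C := C) A
    haveI := isIso_fst_bot i A
    infer_instance
  have hd : ∀ A B : C, IsIso (coprod.inr ≫ (ω A B).hom ≫ prod.snd) := by
    intro A B
    have h := congrArg (fun t => coprod.inr ≫ t ≫ prod.snd) (natX (initial.to A) B)
    simp only [coprod.inr_map_assoc, Category.id_comp, Category.assoc, prod.map_snd,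
      Category.comp_id] at h
    rw [h]
    haveI := isIso_inr_bot (C := C) B
    haveI := isIso_snd_bot i B
    infer_instance
  -- the canonical comparison map is an isomorphism
  have key : ∀ X Y : C,
      IsIso (coprod.desc (prod.lift (𝟙 X) (zeroMor i X Y)) (prod.lift (zeroMor i Y X) (𝟙 Y))) := by
    intro X Y
    haveI := ha X Y
    haveI := hd X Y
    have hEq : coprod.desc (prod.lift (𝟙 X) (zeroMor i X Y)) (prod.lift (zeroMor i Y X) (𝟙 Y)) ≫
        prod.map (coprod.inl ≫ (ω X Y).hom ≫ prod.fst) (coprod.inr ≫ (ω X Y).hom ≫ prod.snd)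
        = (ω X Y).hom := by
      apply coprod.hom_ext <;> apply Limits.prod.hom_ext
      · simp
      · simp only [coprod.inl_desc_assoc, Category.assoc, prod.map_snd, prod.lift_snd_assoc]
        rw [zeroMor_comp]
        exact (hb X Y).symm
      · simp only [coprod.inr_desc_assoc, Category.assoc, prod.map_fst, prod.lift_fst_assoc]
        rw [zeroMor_comp]
        exact (hc X Y).symm
      · simp
    have hc2 : coprod.desc (prod.lift (𝟙 X) (zeroMor i X Y)) (prod.lift (zeroMor i Y X) (𝟙 Y))
        = (ω X Y).hom ≫ inv (prod.map (coprod.inl ≫ (ω X Y).hom ≫ prod.fst)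
            (coprod.inr ≫ (ω X Y).hom ≫ prod.snd)) := by
      rw [IsIso.eq_comp_inv]
      exact hEq
    rw [hc2]
    infer_instance
  refine ⟨key, ?_⟩
  letI := zeroMorphismsOfInitialIsoTerminal i
  constructor
  intro X Y
  haveI := key X Y
  exact HasBinaryBiproduct.mk
    { bicone :=
      { pt := X ⨯ Y
        fst := prod.fst
        snd := prod.snd
        inl := prod.lift (𝟙 X) (zeroMor i X Y)
        inr := prod.lift (zeroMor i Y X) (𝟙 Y)
        inl_fst := by simp
        inl_snd := by show _ = zeroMor i X Y; simp
        inr_fst := by show _ = zeroMor i Y X; simp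
        inr_snd := by simp }
      isBilimit :=
      { isLimit := prodIsProd X Y
        isColimit := (coprodIsCoprod X Y).ofIsoColimit
          (Cocones.ext
            (@asIso _ _ _ _ (coprod.desc (prod.lift (𝟙 X) (zeroMor i X Y))
              (prod.lift (zeroMor i Y X) (𝟙 Y))) (key X Y))
            (by rintro ⟨⟨⟩⟩; exacts [coprod.inl_desc _ _, coprod.inr_desc _ _])) } }
end
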